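/- Let φ be a CNF instance of one-in-three 3SAT. Construct φ′ by Tovey's transformation: replace the d occurrences of each variable z with fresh variables z₁,…,z_d and add two-literal clauses (z₁ ∨ ¬z₂),…,(z_d ∨ ¬z₁); add (z ∨ ¬z) for variables occurring once. Then there is an assignment making exactly one literal true in every clause of φ′ if and only if there is an assignment making exactly one literal true in every clause of φ. (Note that a two-literal clause (a ∨ ¬b) has exactly one true literal iff a and b have the same truth value.) -/
import Mathlib


/-- A CNF formula over variables `V`. -/
abbrev CNF (V : Type) := List (List (V × Bool))

/-- One-in-three satisfaction: every clause has exactly one true literal. -/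
def OneInThree {V : Type} (σ : V → Bool) (φ : CNF V) : Prop :=
  ∀ c ∈ φ, c.countP (fun l => σ l.1 == l.2) = 1

/-- Rename the literals of one clause, giving each occurrence of a variable `z`
the fresh copy `(z, j)` where `j` counts earlier occurrences of `z`. -/
def renameClause : (ℕ → ℕ) → List (ℕ × Bool) → List ((ℕ × ℕ) × Bool) × (ℕ → ℕ)
  | cnt, [] => ([], cnt)
  | cnt, l :: ls =>
      let rest := renameClause (Function.update cnt l.1 (cnt l.1 + 1)) ls
      (((l.1, cnt l.1), l.2) :: rest.1, rest.2)

/-- Rename all clauses of a CNF formula, threading the occurrence counter. -/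
def renameCNF : (ℕ → ℕ) → CNF ℕ → CNF (ℕ × ℕ) × (ℕ → ℕ)
  | cnt, [] => ([], cnt)
  | cnt, c :: cs =>
      let rc := renameClause cnt c
      let rest := renameCNF rc.2 cs
      (rc.1 :: rest.1, rest.2)

/-- Number of occurrences of variable `z` in φ. -/
def occCount (φ : CNF ℕ) (z : ℕ) : ℕ := (φ.flatten.map Prod.fst).count z

/-- The added two-literal clauses for a variable `z` with `d` occurrences. -/
def cycleClauses (z d : ℕ) : CNF (ℕ × ℕ) :=
  if d ≤ 1 then [[((z, 0), true), ((z, 0), false)]]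
  else (List.range d).map fun j => [((z, j), true), ((z, (j + 1) % d), false)]

/-- Tovey's transformation. -/
def tovey (φ : CNF ℕ) : CNF (ℕ × ℕ) :=
  (renameCNF (fun _ => 0) φ).1 ++
    ((φ.flatten.map Prod.fst).dedup.flatMap fun z => cycleClauses z (occCount φ z))

lemma renameClause_cnt (cnt : ℕ → ℕ) (c : List (ℕ × Bool)) (z : ℕ) :
    (renameClause cnt c).2 z = cnt z + (c.map Prod.fst).count z := by
  induction c generalizing cnt with
  | nil => simp [renameClause]
  | cons l ls ih =>
      simp only [renameClause, List.map_cons, List.count_cons, ih]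
      by_cases h : l.1 = z <;> simp [Function.update, h] <;> omega

lemma renameClause_mem (cnt : ℕ → ℕ) (c : List (ℕ × Bool)) (z j : ℕ) (b : Bool)
    (h : ((z, j), b) ∈ (renameClause cnt c).1) :
    cnt z ≤ j ∧ j < (renameClause cnt c).2 z := by
  induction c generalizing cnt with
  | nil => simp [renameClause] at h
  | cons l ls ih =>
      simp only [renameClause, List.mem_cons] at h
      rcases h with h | h
      · injection h with h1 h2
        injection h1 with hz hj
        subst hz; subst hj
        refine ⟨le_refl _, ?_⟩
        rw [renameClause_cnt]
        simp [Function.update]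
      · have := ih _ h
        constructor
        · refine le_trans ?_ this.1
          by_cases hz : z = l.1 <;> simp [Function.update, hz]
        · exact this.2

lemma renameCNF_cnt (cnt : ℕ → ℕ) (cs : CNF ℕ) (z : ℕ) :
    (renameCNF cnt cs).2 z = cnt z + (cs.flatten.map Prod.fst).count z := by
  induction cs generalizing cnt with
  | nil => simp [renameCNF]
  | cons c cs ih =>
      simp only [renameCNF, ih, renameClause_cnt, List.flatten_cons, List.map_append,
        List.count_append]
      omega

lemma renameCNF_mem (cnt : ℕ → ℕ) (cs : CNF ℕ) (c' : List ((ℕ × ℕ) × Bool))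
    (h : c' ∈ (renameCNF cnt cs).1) :
    ∃ c cnt', c ∈ cs ∧ c' = (renameClause cnt' c).1 ∧
      ∀ z, (renameClause cnt' c).2 z ≤ (renameCNF cnt cs).2 z := by
  induction cs generalizing cnt with
  | nil => simp [renameCNF] at h
  | cons c cs ih =>
      simp only [renameCNF, List.mem_cons] at h
      rcases h with h | h
      · refine ⟨c, cnt, List.mem_cons_self .., h, fun z => ?_⟩
        rw [show (renameCNF cnt (c :: cs)).2 = (renameCNF (renameClause cnt c).2 cs).2 from rfl,
          renameCNF_cnt]
        omega
      · obtain ⟨c₀, cnt', hmem, hc, hb⟩ := ih _ h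
        exact ⟨c₀, cnt', List.mem_cons_of_mem _ hmem, hc, fun z => hb z⟩

lemma renameClause_countP (cnt : ℕ → ℕ) (c : List (ℕ × Bool)) (σ' : ℕ × ℕ → Bool)
    (τ : ℕ → Bool)
    (h : ∀ z j b, ((z, j), b) ∈ (renameClause cnt c).1 → σ' (z, j) = τ z) :
    (renameClause cnt c).1.countP (fun l => σ' l.1 == l.2) =
      c.countP (fun l => τ l.1 == l.2) := by
  induction c generalizing cnt with
  | nil => rfl
  | cons l ls ih =>
      have hhead : σ' (l.1, cnt l.1) = τ l.1 :=
        h l.1 (cnt l.1) l.2 (by simp [renameClause])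
      simp only [renameClause, List.countP_cons]
      rw [ih _ (fun z j b hm => h z j b (by simp [renameClause]; right; exact hm))]
      simp [hhead]

lemma two_lit_countP (σ' : ℕ × ℕ → Bool) (a b : ℕ × ℕ) :
    ([(a, true), (b, false)] : List ((ℕ × ℕ) × Bool)).countP
      (fun l => σ' l.1 == l.2) = 1 ↔ σ' a = σ' b := by
  simp only [List.countP_cons, List.countP_nil]
  cases ha : σ' a <;> cases hb : σ' b <;> simp [ha, hb]

lemma cycle_forces (σ' : ℕ × ℕ → Bool) (z d : ℕ)
    (h : ∀ c ∈ cycleClauses z d, c.countP (fun l => σ' l.1 == l.2) = 1) :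
    ∀ j < d, σ' (z, j) = σ' (z, 0) := by
  intro j hj
  by_cases hd : d ≤ 1
  · have : j = 0 := by omega
    subst this; rfl
  · push_neg at hd
    induction j with
    | zero => rfl
    | succ j ihj =>
        have hjd : j < d := Nat.lt_of_succ_lt hj
        have hcl : [((z, j), true), ((z, (j + 1) % d), false)] ∈ cycleClauses z d := by
          simp only [cycleClauses, if_neg (by omega : ¬ d ≤ 1)]
          exact List.mem_map.2 ⟨j, List.mem_range.2 hjd, rfl⟩
        have := (two_lit_countP σ' _ _).1 (h _ hcl)
        rw [Nat.mod_eq_of_lt hj] at this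
        rw [← this]
        exact ihj hjd

lemma cycle_sat (σ : ℕ → Bool) (z d : ℕ) :
    ∀ c ∈ cycleClauses z d, c.countP (fun l => (fun p : ℕ × ℕ => σ p.1) l.1 == l.2) = 1 := by
  intro c hc
  unfold cycleClauses at hc
  split at hc
  · simp only [List.mem_singleton] at hc
    subst hc
    exact (two_lit_countP (fun p => σ p.1) (z, 0) (z, 0)).2 rfl
  · obtain ⟨j, _, rfl⟩ := List.mem_map.1 hc
    exact (two_lit_countP (fun p => σ p.1) (z, j) (z, (j + 1) % d)).2 rfl

lemma renameCNF_mem_fwd (cnt : ℕ → ℕ) (cs : CNF ℕ) (c : List (ℕ × Bool)) (h : c ∈ cs) :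
    ∃ cnt', (renameClause cnt' c).1 ∈ (renameCNF cnt cs).1 ∧
      ∀ z, (renameClause cnt' c).2 z ≤ (renameCNF cnt cs).2 z := by
  induction cs generalizing cnt with
  | nil => simp at h
  | cons c₀ cs ih =>
      rcases List.mem_cons.1 h with rfl | h
      · refine ⟨cnt, List.mem_cons_self .., fun z => ?_⟩
        rw [show (renameCNF cnt (c :: cs)).2 = (renameCNF (renameClause cnt c).2 cs).2 from rfl,
          renameCNF_cnt]
        omega
      · obtain ⟨cnt', hm, hb⟩ := ih (renameClause cnt c₀).2 h
        exact ⟨cnt', List.mem_cons_of_mem _ hm, hb⟩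

/-- Tovey's transformation preserves one-in-three satisfiability. -/
theorem tovey_one_in_three_equisat (φ : CNF ℕ) :
    (∃ σ, OneInThree σ (tovey φ)) ↔ (∃ σ, OneInThree σ φ) := by
  constructor
  · rintro ⟨σ', hσ'⟩
    refine ⟨fun z => σ' (z, 0), ?_⟩
    intro c hc
    obtain ⟨cnt', hmem, hb⟩ := renameCNF_mem_fwd (fun _ => 0) φ c hc
    have hr : (renameClause cnt' c).1 ∈ tovey φ :=
      List.mem_append.2 (Or.inl hmem)
    have h1 := hσ' _ hr
    rw [renameClause_countP cnt' c σ' (fun z => σ' (z, 0)) ?_] at h1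
    · exact h1
    · intro z j b hl
      have hj : j < occCount φ z := by
        have h2 := (renameClause_mem cnt' c z j b hl).2
        have h3 := hb z
        rw [renameCNF_cnt] at h3
        simp only [Nat.zero_add] at h3
        exact lt_of_lt_of_le h2 (le_trans h3 (le_refl _))
      have hpos : 0 < occCount φ z := by omega
      have hz : z ∈ (φ.flatten.map Prod.fst).dedup :=
        List.mem_dedup.2 (List.count_pos_iff.1 hpos)
      have hcyc : ∀ cc ∈ cycleClauses z (occCount φ z),
          cc.countP (fun l => σ' l.1 == l.2) = 1 := fun cc hcc =>
        hσ' _ (List.mem_append.2 (Or.inr (List.mem_flatMap.2 ⟨z, hz, hcc⟩)))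
      exact cycle_forces σ' z _ hcyc j hj
  · rintro ⟨σ, hσ⟩
    refine ⟨fun p => σ p.1, ?_⟩
    intro c hc
    rcases List.mem_append.1 hc with hc | hc
    · obtain ⟨c₀, cnt', hmem, rfl, _⟩ := renameCNF_mem _ _ _ hc
      rw [renameClause_countP cnt' c₀ (fun p => σ p.1) σ (fun z j b _ => rfl)]
      exact hσ _ hmem
    · obtain ⟨z, _, hc⟩ := List.mem_flatMap.1 hc
      exact cycle_sat σ z _ c hc
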